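/- Let N be an integer with |N| ≥ 2. Every root ρ (real or complex) of the polynomial u^6 - 2u^4 + a₁u^3 + u^2 - a₁u + a₀, where a₁ = -2N^3 + 2N + 8/81 and a₀ = N^6 - 2N^4 - (8/81)N^3 + N^2 + (8/81)N - 4/675, satisfies |ρ| < |N| + 1. -/

import Mathlib

/-- Every complex root ρ of u^6 - 2u^4 + a₁u^3 + u^2 - a₁u + a₀, where
a₁ = -2N³ + 2N + 8/81 and a₀ = N⁶ - 2N⁴ - (8/81)N³ + N² + (8/81)N - 4/675,
satisfies |ρ| < |N| + 1, for any integer N with |N| ≥ 2. -/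
theorem stmt15 (N : ℤ) (hN : 2 ≤ |N|) (ρ : ℂ)
    (a₁ a₀ : ℂ)
    (ha₁ : a₁ = -2 * (N : ℂ) ^ 3 + 2 * (N : ℂ) + 8 / 81)
    (ha₀ : a₀ = (N : ℂ) ^ 6 - 2 * (N : ℂ) ^ 4 - (8 / 81) * (N : ℂ) ^ 3 + (N : ℂ) ^ 2
      + (8 / 81) * (N : ℂ) - 4 / 675)
    (hroot : ρ ^ 6 - 2 * ρ ^ 4 + a₁ * ρ ^ 3 + ρ ^ 2 - a₁ * ρ + a₀ = 0) :
    ‖ρ‖ < |(N : ℝ)| + 1 := by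
  subst ha₁ ha₀
  by_contra h
  push_neg at h
  set M : ℝ := |(N : ℝ)| with hM
  have hM2 : 2 ≤ M := by
    have : (2 : ℝ) ≤ |(N : ℝ)| := by
      have := hN
      rw [← Int.cast_abs]
      exact_mod_cast this
    simpa [hM] using this
  set c : ℂ := (N : ℂ) ^ 3 - (N : ℂ) with hc
  set t : ℂ := ρ ^ 3 - ρ - c with ht
  have key : t * (t + 8 / 81) = 4 / 675 := by
    rw [ht, hc]
    linear_combination hroot
  -- bound |c|
  have hcabs : ‖c‖ ≤ M ^ 3 + M := by
    have h2 : ‖(N : ℂ)‖ = M := by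
      simp [Complex.norm_intCast, hM]
    have h1 : ‖(N : ℂ) ^ 3‖ = M ^ 3 := by
      rw [norm_pow, h2]
    calc ‖c‖ ≤ ‖(N : ℂ) ^ 3‖ + ‖(N : ℂ)‖ := by
          rw [hc]; exact norm_sub_le _ _
      _ = M ^ 3 + M := by rw [h1, h2]
  -- set r
  set r : ℝ := ‖ρ‖ with hr
  have hr3 : M + 1 ≤ r := h
  -- lower bound on |t|
  have htabs : 14 ≤ ‖t‖ := by
    have h1 : ‖ρ ^ 3‖ - ‖ρ + c‖ ≤ ‖ρ ^ 3 - (ρ + c)‖ :=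
      norm_sub_norm_le _ _
    have h2 : ‖ρ + c‖ ≤ r + (M ^ 3 + M) := by
      refine le_trans (norm_add_le _ _) ?_
      exact add_le_add le_rfl hcabs
    have h3 : ρ ^ 3 - (ρ + c) = t := by rw [ht]; ring
    have h4 : ‖ρ ^ 3‖ = r ^ 3 := by rw [norm_pow, hr]
    have h5 : r ^ 3 - (r + (M ^ 3 + M)) ≤ ‖t‖ := by
      rw [← h3, ← h4]
      nlinarith [h1, h2]
    -- r ≥ M + 1, M ≥ 2 ⇒ r^3 - r - M^3 - M ≥ 3M^2 + M ≥ 14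
    have hq : 0 ≤ r ^ 2 + r * (M + 1) + (M + 1) ^ 2 - 1 := by nlinarith [hr3, hM2]
    have hm : 0 ≤ (r - (M + 1)) * (r ^ 2 + r * (M + 1) + (M + 1) ^ 2 - 1) :=
      mul_nonneg (by linarith) hq
    nlinarith [h5, hr3, hM2, hm]
  -- upper bound contradiction
  have habs : ‖t‖ * ‖t + 8 / 81‖ = ‖(4 / 675 : ℂ)‖ := by
    rw [← norm_mul, key]
  have h675 : ‖(4 / 675 : ℂ)‖ = 4 / 675 := by
    norm_num [map_div₀]
  have hlb : ‖t‖ - 8 / 81 ≤ ‖t + 8 / 81‖ := by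
    have : ‖t‖ - ‖(8 / 81 : ℂ)‖ ≤ ‖t + 8 / 81‖ := by
      have := norm_sub_norm_le t (-(8 / 81 : ℂ)); rwa [norm_neg, sub_neg_eq_add] at this
    have h8 : ‖(8 / 81 : ℂ)‖ = 8 / 81 := by norm_num [map_div₀]
    linarith [this, h8.le, h8.ge]
  have hpos : (0:ℝ) ≤ ‖t‖ := norm_nonneg t
  nlinarith [habs, hlb, htabs, hpos, h675]
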